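/- (Finite character of morphisms) Let K be an inductive amalgamation class and let M, N be models of K. A map f : M → N is a morphism of K if and only if for every finite h ⊆ f the map h : M → N is a morphism of K. -/

import Mathlib

namespace Amalg

open FirstOrder FirstOrder.Language Set Cardinal

universe u

/-- A "model": an `L`-structure whose carrier is a subset of the fixed universe of points `W`. -/
structure Mdl (L : FirstOrder.Language.{u, u}) (W : Type u) where
  s : Set W
  str : L.Structure ↥s

attribute [instance] Mdl.str

variable {L : FirstOrder.Language.{u, u}} {W : Type u}

/-- The graph of the identity map on a set `s`. -/
def idGraph (s : Set W) : Set (W × W) := {p | p.1 ∈ s ∧ p.1 = p.2}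

/-- Composition of (graphs of) partial maps. -/
def relComp (F G : Set (W × W)) : Set (W × W) := {p | ∃ b, (p.1, b) ∈ F ∧ (b, p.2) ∈ G}

/-- The graph of the inverse of a partial map. -/
def swapGraph (G : Set (W × W)) : Set (W × W) := {p | (p.2, p.1) ∈ G}

/-- The graph `G` is a map from (a subset of) `M` to `N`. -/
def inCarriers (M N : Mdl L W) (G : Set (W × W)) : Prop :=
  ∀ p ∈ G, p.1 ∈ M.s ∧ p.2 ∈ N.s

/-- `G` is (the graph of) a partial embedding from `M` to `N`: it preserves all
quantifier-free formulas in both directions. -/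
def IsPartialEmbedding (M N : Mdl L W) (G : Set (W × W)) : Prop :=
  inCarriers M N G ∧
    ∀ (n : ℕ) (φ : L.Formula (Fin n)), φ.IsQF →
      ∀ (x : Fin n → ↥M.s) (y : Fin n → ↥N.s),
        (∀ i, ((x i : W), (y i : W)) ∈ G) → (φ.Realize x ↔ φ.Realize y)

/-- `G` is (the graph of) an elementary map from `M` to `N`: it preserves all
first-order formulas in both directions. -/
def IsElemMap (M N : Mdl L W) (G : Set (W × W)) : Prop :=
  inCarriers M N G ∧
    ∀ (n : ℕ) (φ : L.Formula (Fin n)) (x : Fin n → ↥M.s) (y : Fin n → ↥N.s),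
      (∀ i, ((x i : W), (y i : W)) ∈ G) → (φ.Realize x ↔ φ.Realize y)

/-- A category of infinite `L`-structures and partial embeddings between them, satisfying
axioms K0, K1, K2. -/
structure CatC (L : FirstOrder.Language.{u, u}) (W : Type u) where
  IsMdl : Mdl L W → Prop
  IsMor : Mdl L W → Mdl L W → Set (W × W) → Prop
  infinite : ∀ M, IsMdl M → M.s.Infinite
  mor_src : ∀ M N G, IsMor M N G → IsMdl M
  mor_tgt : ∀ M N G, IsMor M N G → IsMdl N
  mor_pe : ∀ M N G, IsMor M N G → IsPartialEmbedding M N G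
  id_mor : ∀ M, IsMdl M → IsMor M M (idGraph M.s)
  comp_mor : ∀ M N P F G, IsMor M N F → IsMor N P G → IsMor M P (relComp F G)
  k0 : ∀ M N : Mdl L W, IsMdl M → (↥M.s ≅[L] ↥N.s) → IsMdl N
  k1 : ∀ M N G, IsMdl M → IsMdl N → IsElemMap M N G → IsMor M N G
  k2 : ∀ M N G, IsMor M N G → IsMor N M (swapGraph G)

/-- `M` is a strong submodel of `N`: `M ⊆ N` and the identity on `M` is a morphism. -/
def Le (IsMor : Mdl L W → Mdl L W → Set (W × W) → Prop) (M N : Mdl L W) : Prop :=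
  M.s ⊆ N.s ∧ IsMor M N (idGraph M.s)

/-- `G` is a strong embedding of `M` into `N`: a total morphism. -/
def StrongEmb (IsMor : Mdl L W → Mdl L W → Set (W × W) → Prop)
    (M N : Mdl L W) (G : Set (W × W)) : Prop :=
  IsMor M N G ∧ ∀ a ∈ M.s, ∃ b, (a, b) ∈ G

/-- A category as above additionally satisfying axiom R (restrictions of morphisms
are morphisms). -/
structure CatR (L : FirstOrder.Language.{u, u}) (W : Type u) extends CatC L W where
  restr : ∀ M N F G, IsMor M N G → F ⊆ G → IsMor M N F

/-- An inductive amalgamation class: axioms K0, K1, K2, R, Ap and In. -/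
structure IAC (L : FirstOrder.Language.{u, u}) (W : Type u) extends CatR L W where
  ap : ∀ M N F, IsMor M N F →
    ∃ (N' : Mdl L W) (H : Set (W × W)), Le IsMor N N' ∧ F ⊆ H ∧ StrongEmb IsMor M N' H
  ind : ∀ (ι : Type u) [LinearOrder ι] [Nonempty ι] (Ms : ι → Mdl L W),
    (∀ i j, i ≤ j → Le IsMor (Ms i) (Ms j)) →
    ∃ Mu : Mdl L W, Mu.s = ⋃ i, (Ms i).s ∧ IsMdl Mu ∧ ∀ i, Le IsMor (Ms i) Mu

/-- `U` is a `κ`-rich model: every morphism `f : M → U` with `|f| < |M| ≤ κ` extends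
to a strong embedding of `M` into `U`. -/
def RichAt (IsMdl : Mdl L W → Prop) (IsMor : Mdl L W → Mdl L W → Set (W × W) → Prop)
    (κ : Cardinal.{u}) (U : Mdl L W) : Prop :=
  IsMdl U ∧ ∀ (M : Mdl L W) (G : Set (W × W)), IsMor M U G → #↥G < #↥M.s → #↥M.s ≤ κ →
    ∃ H, G ⊆ H ∧ StrongEmb IsMor M U H

/-- `U` is rich: `|U|`-rich. -/
def Rich (IsMdl : Mdl L W → Prop) (IsMor : Mdl L W → Mdl L W → Set (W × W) → Prop)
    (U : Mdl L W) : Prop :=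
  RichAt IsMdl IsMor (#↥U.s) U

/-- The class is connected: between any two models there is a morphism. -/
def Connected (IsMdl : Mdl L W → Prop)
    (IsMor : Mdl L W → Mdl L W → Set (W × W) → Prop) : Prop :=
  ∀ M N, IsMdl M → IsMdl N → ∃ G, IsMor M N G

/-- The theory of the rich models: the sentences true in every rich model. -/
def Trich (IsMdl : Mdl L W → Prop)
    (IsMor : Mdl L W → Mdl L W → Set (W × W) → Prop) : L.Theory :=
  {φ | ∀ U : Mdl L W, Rich IsMdl IsMor U → Sentence.Realize (↥U.s) φ}

/-- The class is full: if every sentence true in a model `M` is true in some rich model,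
then some rich model satisfies the whole theory of `M`. -/
def Full (IsMdl : Mdl L W → Prop)
    (IsMor : Mdl L W → Mdl L W → Set (W × W) → Prop) : Prop :=
  ∀ M, IsMdl M →
    (∀ φ : L.Sentence, Sentence.Realize (↥M.s) φ → ∃ U, Rich IsMdl IsMor U ∧ Sentence.Realize (↥U.s) φ) →
    ∃ U, Rich IsMdl IsMor U ∧ ∀ φ : L.Sentence, Sentence.Realize (↥M.s) φ → Sentence.Realize (↥U.s) φ

/-- `M` is a substructure of `N`: `M ⊆ N` and the inclusion is a partial embedding. -/
def Substr (M N : Mdl L W) : Prop :=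
  M.s ⊆ N.s ∧ IsPartialEmbedding M N (idGraph M.s)

/-- `M` is an elementary substructure of `N`. -/
def ElemSubstr (M N : Mdl L W) : Prop :=
  M.s ⊆ N.s ∧ IsElemMap M N (idGraph M.s)

/-- Realization of a formula in an explicitly given structure. -/
def RealizeIn (L : FirstOrder.Language.{u, u}) (N : Type u) (SN : L.Structure N) {α : Type u}
    (φ : L.Formula α) (v : α → N) : Prop :=
  letI := SN
  φ.Realize v

/-- `M` is `κ`-saturated: every type (in finitely many variables) over a parameter set
`A ⊆ M` with `|A| < κ` which is consistent with the theory of `M` with parameters from `A`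
is realized in `M`. -/
def IsSatAt (L : FirstOrder.Language.{u, u}) (κ : Cardinal.{u}) (M : Type u) [L.Structure M] : Prop :=
  ∀ (A : Set M), #↥A < κ →
    ∀ (n : ℕ) (p : Set (L.Formula (Fin n ⊕ ↥A))),
      (∃ (N : Type u) (SN : L.Structure N) (v : ↥A → N) (w : Fin n → N),
        (∀ ψ : L.Formula ↥A, ψ.Realize ((↑) : ↥A → M) ↔ RealizeIn L N SN ψ v) ∧
        ∀ φ ∈ p, RealizeIn L N SN φ (Sum.elim w v)) →
      ∃ a : Fin n → M, ∀ φ ∈ p, φ.Realize (Sum.elim a ((↑) : ↥A → M))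

/-- `M` is saturated: `|M|`-saturated. -/
def IsSat (L : FirstOrder.Language.{u, u}) (M : Type u) [L.Structure M] : Prop :=
  IsSatAt L (#M) M

/-- A theory is model-complete: whenever `M ⊆ N` are models of `T`,
`M` is an elementary substructure of `N`. -/
def IsModelComplete (W : Type u) (T : L.Theory) : Prop :=
  ∀ M N : Mdl L W, Theory.Model (↥M.s) T → Theory.Model (↥N.s) T → Substr M N → ElemSubstr M N



/-! ### Auxiliary lemmas for Statement 8 -/

section FiniteCharacterAux

theorem relComp_id_left' {A : Set W} {G : Set (W × W)} (h : ∀ p ∈ G, p.1 ∈ A) :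
    relComp (idGraph A) G = G := by
  ext ⟨a, b⟩
  simp only [relComp, idGraph, Set.mem_setOf_eq]
  constructor
  · rintro ⟨c, ⟨_, rfl⟩, hc⟩; exact hc
  · intro h2; exact ⟨a, ⟨h (a, b) h2, rfl⟩, h2⟩

theorem relComp_id_right' {B : Set W} {G : Set (W × W)} (h : ∀ p ∈ G, p.2 ∈ B) :
    relComp G (idGraph B) = G := by
  ext ⟨a, b⟩
  simp only [relComp, idGraph, Set.mem_setOf_eq]
  constructor
  · rintro ⟨c, hc, ⟨_, rfl⟩⟩; exact hc
  · intro h2; exact ⟨b, h2, h (a, b) h2, rfl⟩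

theorem relComp_swap_id_left' {A : Set W} {G : Set (W × W)} (h : ∀ p ∈ G, p.1 ∈ A) :
    relComp (swapGraph (idGraph A)) G = G := by
  ext ⟨a, b⟩
  simp only [relComp, swapGraph, idGraph, Set.mem_setOf_eq]
  constructor
  · rintro ⟨c, ⟨_, rfl⟩, hc⟩; exact hc
  · intro h2; exact ⟨a, ⟨h (a, b) h2, rfl⟩, h2⟩

theorem relComp_swap_id_right' {B : Set W} {G : Set (W × W)} (h : ∀ p ∈ G, p.2 ∈ B) :
    relComp G (swapGraph (idGraph B)) = G := by
  ext ⟨a, b⟩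
  simp only [relComp, swapGraph, idGraph, Set.mem_setOf_eq]
  constructor
  · rintro ⟨c, hc, ⟨_, h2⟩⟩; subst h2; exact hc
  · intro h2; exact ⟨b, h2, h (a, b) h2, rfl⟩

theorem relComp_id_id' {A B : Set W} (h : A ⊆ B) :
    relComp (idGraph A) (idGraph B) = idGraph A := by
  ext ⟨a, b⟩
  simp only [relComp, idGraph, Set.mem_setOf_eq]
  constructor
  · rintro ⟨c, ⟨ha, rfl⟩, ⟨_, rfl⟩⟩; exact ⟨ha, rfl⟩
  · rintro ⟨ha, rfl⟩; exact ⟨a, ⟨ha, rfl⟩, h ha, rfl⟩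

theorem swapGraph_insert' {a b : W} {G : Set (W × W)} :
    swapGraph (insert (a, b) G) = insert (b, a) (swapGraph G) := by
  ext ⟨x, y⟩
  simp only [swapGraph, Set.mem_insert_iff, Set.mem_setOf_eq, Prod.mk.injEq]
  tauto

theorem swapGraph_swapGraph' (G : Set (W × W)) : swapGraph (swapGraph G) = G := rfl

variable {K : IAC L W}

theorem mor_dom {A B : Mdl L W} {F : Set (W × W)} (h : K.IsMor A B F) :
    ∀ p ∈ F, p.1 ∈ A.s := fun p hp => ((K.mor_pe _ _ _ h).1 p hp).1

theorem mor_rng {A B : Mdl L W} {F : Set (W × W)} (h : K.IsMor A B F) :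
    ∀ p ∈ F, p.2 ∈ B.s := fun p hp => ((K.mor_pe _ _ _ h).1 p hp).2

theorem le_refl_of_isMdl {A : Mdl L W} (h : K.IsMdl A) : Le K.IsMor A A :=
  ⟨subset_rfl, K.id_mor A h⟩

theorem le_trans' {A B C : Mdl L W} (h1 : Le K.IsMor A B) (h2 : Le K.IsMor B C) :
    Le K.IsMor A C := by
  refine ⟨h1.1.trans h2.1, ?_⟩
  have := K.comp_mor A B C _ _ h1.2 h2.2
  rwa [relComp_id_id' h1.1] at this

theorem isMdl_of_le_left {A B : Mdl L W} (h : Le K.IsMor A B) : K.IsMdl A :=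
  K.mor_src _ _ _ h.2

theorem isMdl_of_le_right {A B : Mdl L W} (h : Le K.IsMor A B) : K.IsMdl B :=
  K.mor_tgt _ _ _ h.2

/-- enlarge the target along `Le`. -/
theorem mor_target_up {A B B' : Mdl L W} {F : Set (W × W)}
    (h : K.IsMor A B F) (hle : Le K.IsMor B B') : K.IsMor A B' F := by
  have := K.comp_mor A B B' _ _ h hle.2
  rwa [relComp_id_right' (mor_rng h)] at this

/-- enlarge the source along `Le`. -/
theorem mor_source_up {A A' B : Mdl L W} {F : Set (W × W)}
    (h : K.IsMor A B F) (hle : Le K.IsMor A A') : K.IsMor A' B F := by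
  have := K.comp_mor A' A B _ _ (K.k2 _ _ _ hle.2) h
  rwa [relComp_swap_id_left' (mor_dom h)] at this

/-- shrink the target along `Le`, provided the range fits. -/
theorem mor_target_down {A B B' : Mdl L W} {F : Set (W × W)}
    (h : K.IsMor A B' F) (hle : Le K.IsMor B B') (hrng : ∀ p ∈ F, p.2 ∈ B.s) :
    K.IsMor A B F := by
  have := K.comp_mor A B' B _ _ h (K.k2 _ _ _ hle.2)
  rwa [relComp_swap_id_right' hrng] at this

/-- shrink the source along `Le`, provided the domain fits. -/
theorem mor_source_down {A A' B : Mdl L W} {F : Set (W × W)}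
    (h : K.IsMor A' B F) (hle : Le K.IsMor A A') (hdom : ∀ p ∈ F, p.1 ∈ A.s) :
    K.IsMor A B F := by
  have := K.comp_mor A A' B _ _ hle.2 h
  rwa [relComp_id_left' hdom] at this

/-- A Zorn argument: there is a pair of `Le`-extensions of `(M, N)` that is maximal
in the componentwise `Le`-preorder. -/
theorem exists_maximal_pair (K : IAC L W) (M N : Mdl L W) (hM : K.IsMdl M) (hN : K.IsMdl N) :
    ∃ A B : Mdl L W, Le K.IsMor M A ∧ Le K.IsMor N B ∧
      ∀ A' B' : Mdl L W, Le K.IsMor M A' → Le K.IsMor N B' →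
        Le K.IsMor A A' → Le K.IsMor B B' → Le K.IsMor A' A ∧ Le K.IsMor B' B := by
  classical
  let Q := {p : Mdl L W × Mdl L W // Le K.IsMor M p.1 ∧ Le K.IsMor N p.2}
  letI : Preorder Q :=
    { le := fun p q => Le K.IsMor p.1.1 q.1.1 ∧ Le K.IsMor p.1.2 q.1.2
      le_refl := fun p => ⟨le_refl_of_isMdl (isMdl_of_le_right p.2.1),
        le_refl_of_isMdl (isMdl_of_le_right p.2.2)⟩
      le_trans := fun p q r h1 h2 => ⟨le_trans' h1.1 h2.1, le_trans' h1.2 h2.2⟩ }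
  have hbdd : ∀ c : Set Q, IsChain (· ≤ ·) c → BddAbove c := by
    intro c hc
    rcases c.eq_empty_or_nonempty with rfl | ⟨i0, hi0⟩
    · exact ⟨⟨(M, N), le_refl_of_isMdl hM, le_refl_of_isMdl hN⟩, by
        simp [upperBounds]⟩
    · set σ := ↥c with hσ
      let sr : σ → σ → Prop := fun i j =>
        (i.1 ≤ j.1 ∧ ¬ j.1 ≤ i.1) ∨ ((i.1 ≤ j.1 ∧ j.1 ≤ i.1) ∧ WellOrderingRel i j)
      have sr_le : ∀ {i j : σ}, sr i j → i.1 ≤ j.1 := by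
        rintro i j (h | h)
        exacts [h.1, h.1.1]
      haveI hsto : IsStrictTotalOrder σ sr := by
        refine { trichotomous := ?_, irrefl := ?_, trans := ?_ }
        · intro i j
          suffices hsuff : sr i j ∨ i = j ∨ sr j i by
            intro hnij hnji
            rcases hsuff with h | h | h
            exacts [absurd h hnij, h, absurd h hnji]
          by_cases hij : i = j
          · exact Or.inr (Or.inl hij)
          rcases hc.total i.2 j.2 with h | h
          · by_cases hba : j.1 ≤ i.1
            · rcases trichotomous_of WellOrderingRel i j with hw | hw | hw
              · exact Or.inl (Or.inr ⟨⟨h, hba⟩, hw⟩)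
              · exact Or.inr (Or.inl hw)
              · exact Or.inr (Or.inr (Or.inr ⟨⟨hba, h⟩, hw⟩))
            · exact Or.inl (Or.inl ⟨h, hba⟩)
          · by_cases hba : i.1 ≤ j.1
            · rcases trichotomous_of WellOrderingRel i j with hw | hw | hw
              · exact Or.inl (Or.inr ⟨⟨hba, h⟩, hw⟩)
              · exact Or.inr (Or.inl hw)
              · exact Or.inr (Or.inr (Or.inr ⟨⟨h, hba⟩, hw⟩))
            · exact Or.inr (Or.inr (Or.inl ⟨h, hba⟩))
        · intro i h
          rcases h with h | h
          · exact h.2 h.1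
          · exact irrefl_of WellOrderingRel i h.2
        · rintro i j k (h1 | h1) (h2 | h2)
          · exact Or.inl ⟨h1.1.trans h2.1, fun hki => h1.2 (h2.1.trans hki)⟩
          · exact Or.inl ⟨h1.1.trans h2.1.1, fun hki => h1.2 (h2.1.1.trans hki)⟩
          · exact Or.inl ⟨h1.1.1.trans h2.1, fun hki => h2.2 (hki.trans h1.1.1)⟩
          · exact Or.inr ⟨⟨h1.1.1.trans h2.1.1, h2.1.2.trans h1.1.2⟩,
              trans_of WellOrderingRel h1.2 h2.2⟩
      letI lo : LinearOrder σ := @linearOrderOfSTO σ sr hsto (Classical.decRel sr)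
      haveI : Nonempty σ := ⟨⟨i0, hi0⟩⟩
      have hle_imp : ∀ i j : σ, lo.le i j → i.1 ≤ j.1 := by
        intro i j h
        have h' : i = j ∨ sr i j := h
        rcases h' with rfl | h'
        · exact le_refl _
        · exact sr_le h'
      obtain ⟨Mu1, _, hMdl1, hLe1⟩ := K.ind σ (fun i => i.1.1.1)
        (fun i j h => (hle_imp i j h).1)
      obtain ⟨Mu2, _, hMdl2, hLe2⟩ := K.ind σ (fun i => i.1.1.2)
        (fun i j h => (hle_imp i j h).2)
      refine ⟨⟨(Mu1, Mu2), ?_, ?_⟩, ?_⟩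
      · exact le_trans' i0.2.1 (hLe1 ⟨i0, hi0⟩)
      · exact le_trans' i0.2.2 (hLe2 ⟨i0, hi0⟩)
      · intro p hp
        exact ⟨hLe1 ⟨p, hp⟩, hLe2 ⟨p, hp⟩⟩
  obtain ⟨m, hm⟩ := zorn_le hbdd
  refine ⟨m.1.1, m.1.2, m.2.1, m.2.2, ?_⟩
  intro A' B' hMA' hNB' hAA' hBB'
  have h := hm (b := ⟨(A', B'), hMA', hNB'⟩) ⟨hAA', hBB'⟩
  exact ⟨h.1, h.2⟩

/-- Abstract back-and-forth lemma: if a family `P` of relations between two structures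
consists of quantifier-free-formula preserving relations and has the one-point extension
property on both sides, then each member preserves all formulas. -/
theorem ef_lemma {SA SB : Type u} [L.Structure SA] [L.Structure SB]
    (P : Set (SA × SB) → Prop)
    (hqf : ∀ F, P F → ∀ (m : ℕ) (ψ : L.Formula (Fin m)), ψ.IsQF →
      ∀ (x : Fin m → SA) (y : Fin m → SB), (∀ i, (x i, y i) ∈ F) →
        (ψ.Realize x ↔ ψ.Realize y))
    (hforth : ∀ F, P F → ∀ a : SA, ∃ b : SB, P (insert (a, b) F))
    (hback : ∀ F, P F → ∀ b : SB, ∃ a : SA, P (insert (a, b) F)) :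
    ∀ (n k : ℕ) (φ : L.BoundedFormula (Fin n) k) (F), P F →
      ∀ (v : Fin n → SA) (v' : Fin n → SB) (xs : Fin k → SA) (xs' : Fin k → SB),
        (∀ i, (v i, v' i) ∈ F) → (∀ i, (xs i, xs' i) ∈ F) →
        (φ.Realize v xs ↔ φ.Realize v' xs') := by
  intro n k φ
  induction φ with
  | falsum =>
    intro F _ v v' xs xs' _ _
    exact Iff.rfl
  | @equal k t₁ t₂ =>
    intro F hF v v' xs xs' hv hxs
    have e : (Fin n ⊕ Fin k) ≃ Fin (n + k) := finSumFinEquiv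
    have hx : ∀ i : Fin (n + k), (Sum.elim v xs (e.symm i), Sum.elim v' xs' (e.symm i)) ∈ F := by
      intro i
      rcases h : e.symm i with a | a
      · exact hv a
      · exact hxs a
    have hqf' : (Term.equal (t₁.relabel e) (t₂.relabel e) : L.Formula (Fin (n + k))).IsQF :=
      (BoundedFormula.IsAtomic.equal _ _).isQF
    have key := hqf F hF (n + k) _ hqf'
      (fun i => Sum.elim v xs (e.symm i)) (fun i => Sum.elim v' xs' (e.symm i)) hx
    have hcomp : ∀ {C : Type u} (w : Fin n → C) (ws : Fin k → C),
        ((fun i => Sum.elim w ws (e.symm i)) ∘ (e : (Fin n ⊕ Fin k) → Fin (n + k)))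
          = Sum.elim w ws := by
      intro C w ws
      funext j
      simp
    rw [show (BoundedFormula.equal t₁ t₂ : L.BoundedFormula (Fin n) k) = t₁.bdEqual t₂ from rfl,
      BoundedFormula.realize_bdEqual, BoundedFormula.realize_bdEqual]
    simpa only [Formula.realize_equal, Term.realize_relabel, hcomp] using key
  | @rel k l R ts =>
    intro F hF v v' xs xs' hv hxs
    have e : (Fin n ⊕ Fin k) ≃ Fin (n + k) := finSumFinEquiv
    have hx : ∀ i : Fin (n + k), (Sum.elim v xs (e.symm i), Sum.elim v' xs' (e.symm i)) ∈ F := by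
      intro i
      rcases h : e.symm i with a | a
      · exact hv a
      · exact hxs a
    have hqf' : (Relations.formula R (fun i => (ts i).relabel e) :
        L.Formula (Fin (n + k))).IsQF :=
      (BoundedFormula.IsAtomic.rel _ _).isQF
    have key := hqf F hF (n + k) _ hqf'
      (fun i => Sum.elim v xs (e.symm i)) (fun i => Sum.elim v' xs' (e.symm i)) hx
    have hcomp : ∀ {C : Type u} (w : Fin n → C) (ws : Fin k → C),
        ((fun i => Sum.elim w ws (e.symm i)) ∘ (e : (Fin n ⊕ Fin k) → Fin (n + k)))
          = Sum.elim w ws := by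
      intro C w ws
      funext j
      simp
    rw [show (BoundedFormula.rel R ts : L.BoundedFormula (Fin n) k)
        = Relations.boundedFormula R ts from rfl,
      BoundedFormula.realize_rel, BoundedFormula.realize_rel]
    simpa only [Formula.realize_rel, Term.realize_relabel, hcomp] using key
  | imp φ ψ ihφ ihψ =>
    intro F hF v v' xs xs' hv hxs
    rw [BoundedFormula.realize_imp, BoundedFormula.realize_imp,
      ihφ F hF v v' xs xs' hv hxs, ihψ F hF v v' xs xs' hv hxs]
  | @all k φ ihφ =>
    intro F hF v v' xs xs' hv hxs
    rw [BoundedFormula.realize_all, BoundedFormula.realize_all]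
    constructor
    · intro h b
      obtain ⟨a, hF'⟩ := hback F hF b
      have hv' : ∀ i, (v i, v' i) ∈ insert (a, b) F := fun i => Set.mem_insert_of_mem _ (hv i)
      have hxs' : ∀ i : Fin (k + 1),
          ((Fin.snoc xs a : Fin (k + 1) → SA) i, (Fin.snoc xs' b : Fin (k + 1) → SB) i)
            ∈ insert (a, b) F := by
        intro i
        refine Fin.lastCases ?_ ?_ i
        · simp only [Fin.snoc_last]
          exact Set.mem_insert _ _
        · intro j
          simp only [Fin.snoc_castSucc]
          exact Set.mem_insert_of_mem _ (hxs j)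
      exact (ihφ (insert (a, b) F) hF' v v' (Fin.snoc xs a) (Fin.snoc xs' b) hv' hxs').mp (h a)
    · intro h a
      obtain ⟨b, hF'⟩ := hforth F hF a
      have hv' : ∀ i, (v i, v' i) ∈ insert (a, b) F := fun i => Set.mem_insert_of_mem _ (hv i)
      have hxs' : ∀ i : Fin (k + 1),
          ((Fin.snoc xs a : Fin (k + 1) → SA) i, (Fin.snoc xs' b : Fin (k + 1) → SB) i)
            ∈ insert (a, b) F := by
        intro i
        refine Fin.lastCases ?_ ?_ i
        · simp only [Fin.snoc_last]
          exact Set.mem_insert _ _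
        · intro j
          simp only [Fin.snoc_castSucc]
          exact Set.mem_insert_of_mem _ (hxs j)
      exact (ihφ (insert (a, b) F) hF' v v' (Fin.snoc xs a) (Fin.snoc xs' b) hv' hxs').mpr (h b)

/-- One-point extension of morphisms into a maximal pair: the "forth" property. -/
theorem maximal_forth (K : IAC L W) {M N A B : Mdl L W}
    (hMA : Le K.IsMor M A) (hNB : Le K.IsMor N B)
    (hmax : ∀ A' B' : Mdl L W, Le K.IsMor M A' → Le K.IsMor N B' →
      Le K.IsMor A A' → Le K.IsMor B B' → Le K.IsMor A' A ∧ Le K.IsMor B' B)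
    {F : Set (W × W)} (hF : K.IsMor A B F) :
    ∀ x ∈ A.s, ∃ y ∈ B.s, K.IsMor A B (insert (x, y) F) := by
  intro x hx
  obtain ⟨N', H, hLeBN', hFH, hH, hTot⟩ := K.ap A B F hF
  obtain ⟨y, hxy⟩ := hTot x hx
  have hyN' : y ∈ N'.s := mor_rng hH (x, y) hxy
  have hmor : K.IsMor A N' (insert (x, y) F) := by
    refine K.restr _ _ _ _ hH ?_
    intro p hp
    rcases hp with rfl | hp
    · exact hxy
    · exact hFH hp
  have hpair := hmax A N' hMA (le_trans' hNB hLeBN')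
    (le_refl_of_isMdl (K.mor_src _ _ _ hF)) hLeBN'
  exact ⟨y, hpair.2.1 hyN', mor_target_up hmor hpair.2⟩

/-- One-point extension of morphisms into a maximal pair: the "back" property. -/
theorem maximal_back (K : IAC L W) {M N A B : Mdl L W}
    (hMA : Le K.IsMor M A) (hNB : Le K.IsMor N B)
    (hmax : ∀ A' B' : Mdl L W, Le K.IsMor M A' → Le K.IsMor N B' →
      Le K.IsMor A A' → Le K.IsMor B B' → Le K.IsMor A' A ∧ Le K.IsMor B' B)
    {F : Set (W × W)} (hF : K.IsMor A B F) :
    ∀ y ∈ B.s, ∃ x ∈ A.s, K.IsMor A B (insert (x, y) F) := by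
  intro y hy
  have hFswap : K.IsMor B A (swapGraph F) := K.k2 _ _ _ hF
  obtain ⟨M', H, hLeAM', hFH, hH, hTot⟩ := K.ap B A (swapGraph F) hFswap
  obtain ⟨x, hyx⟩ := hTot y hy
  have hxM' : x ∈ M'.s := mor_rng hH (y, x) hyx
  have hmor : K.IsMor B M' (insert (y, x) (swapGraph F)) := by
    refine K.restr _ _ _ _ hH ?_
    intro p hp
    rcases hp with rfl | hp
    · exact hyx
    · exact hFH hp
  have hmor2 : K.IsMor M' B (swapGraph (insert (y, x) (swapGraph F))) := K.k2 _ _ _ hmor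
  rw [swapGraph_insert', swapGraph_swapGraph'] at hmor2
  have hpair := hmax M' B (le_trans' hMA hLeAM') hNB hLeAM'
    (le_refl_of_isMdl (K.mor_tgt _ _ _ hF))
  refine ⟨x, hpair.1.1 hxM', mor_source_down hmor2 hLeAM' ?_⟩
  intro p hp
  rcases hp with rfl | hp
  · exact hpair.1.1 hxM'
  · exact mor_dom hF p hp

end FiniteCharacterAux

/-- Finite character: a map is a morphism iff all its finite restrictions
are morphisms. -/
theorem statement_8 (K : IAC L W) (M N : Mdl L W) (hM : K.IsMdl M) (hN : K.IsMdl N)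
    (G : Set (W × W)) (hin : inCarriers M N G)
    (hfun : ∀ a b b', (a, b) ∈ G → (a, b') ∈ G → b = b') :
    K.IsMor M N G ↔ ∀ H ⊆ G, H.Finite → K.IsMor M N H := by
  constructor
  · intro hmor H hHG _
    exact K.restr M N H G hmor hHG
  · intro h
    obtain ⟨A, B, hMA, hNB, hmax⟩ := exists_maximal_pair K M N hM hN
    -- every finite subset of G is a morphism from A to B
    have hup : ∀ f ⊆ G, f.Finite → K.IsMor A B f := fun f hf hfin =>
      mor_source_up (mor_target_up (h f hf hfin) hNB) hMA
    -- the embedding of subtype relations into W × W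
    let em : Set (↥A.s × ↥B.s) → Set (W × W) :=
      fun F => (fun q : ↥A.s × ↥B.s => ((q.1 : W), (q.2 : W))) '' F
    let P : Set (↥A.s × ↥B.s) → Prop := fun F => K.IsMor A B (em F)
    have hqfP : ∀ F, P F → ∀ (m : ℕ) (ψ : L.Formula (Fin m)), ψ.IsQF →
        ∀ (x : Fin m → ↥A.s) (y : Fin m → ↥B.s), (∀ i, (x i, y i) ∈ F) →
          (ψ.Realize x ↔ ψ.Realize y) := by
      intro F hF m ψ hψ x y hxy
      exact (K.mor_pe _ _ _ hF).2 m ψ hψ x y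
        (fun i => Set.mem_image_of_mem _ (hxy i))
    have hforthP : ∀ F, P F → ∀ a : ↥A.s, ∃ b : ↥B.s, P (insert (a, b) F) := by
      intro F hF a
      obtain ⟨y, hy, hmor⟩ := maximal_forth K hMA hNB hmax hF (a : W) a.2
      refine ⟨⟨y, hy⟩, ?_⟩
      have : em (insert (a, ⟨y, hy⟩) F) = insert ((a : W), y) (em F) := by
        simp only [em, Set.image_insert_eq]
      rw [show P (insert (a, ⟨y, hy⟩) F) = K.IsMor A B (em (insert (a, ⟨y, hy⟩) F)) from rfl,
        this]
      exact hmor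
    have hbackP : ∀ F, P F → ∀ b : ↥B.s, ∃ a : ↥A.s, P (insert (a, b) F) := by
      intro F hF b
      obtain ⟨x, hx, hmor⟩ := maximal_back K hMA hNB hmax hF (b : W) b.2
      refine ⟨⟨x, hx⟩, ?_⟩
      have : em (insert (⟨x, hx⟩, b) F) = insert (x, (b : W)) (em F) := by
        simp only [em, Set.image_insert_eq]
      rw [show P (insert (⟨x, hx⟩, b) F) = K.IsMor A B (em (insert (⟨x, hx⟩, b) F)) from rfl,
        this]
      exact hmor
    -- G is an elementary map from A to B
    have helem : IsElemMap A B G := by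
      refine ⟨fun p hp => ⟨hMA.1 (hin p hp).1, hNB.1 (hin p hp).2⟩, ?_⟩
      intro n φ x y hxy
      -- the finite piece of G spanned by the tuples
      let F0 : Set (↥A.s × ↥B.s) := Set.range (fun i => (x i, y i))
      have hem : em F0 = Set.range (fun i => ((x i : W), (y i : W))) := by
        simp only [em, F0, ← Set.range_comp]
        rfl
      have hP0 : P F0 := by
        rw [show P F0 = K.IsMor A B (em F0) from rfl, hem]
        refine hup _ ?_ (Set.finite_range _)
        rintro p ⟨i, rfl⟩
        exact hxy i
      have := ef_lemma P hqfP hforthP hbackP n 0 φ F0 hP0 x y default default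
        (fun i => ⟨i, rfl⟩) (fun i => i.elim0)
      exact this
    have hABG : K.IsMor A B G :=
      K.k1 A B G (isMdl_of_le_right hMA) (isMdl_of_le_right hNB) helem
    have hANG : K.IsMor A N G :=
      mor_target_down hABG hNB (fun p hp => (hin p hp).2)
    exact mor_source_down hANG hMA (fun p hp => (hin p hp).1)


end Amalg
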